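/- Let x : ℝ → ℝ and u : ℝ → ℝ be real-analytic near y₀, with x(y) − x(y₀) having a zero of exact order 2n+1 at y₀ (n ≥ 1) and u(y) − u(y₀) having a zero of exact order 2n at y₀. Then, for the inverse function y(x) defined near x₀ = x(y₀), one has y(x) − y₀ = O(|x − x₀|^{1/(2n+1)}) and u(y(x)) − u(y₀) = O(|x − x₀|^{2n/(2n+1)}) as x → x₀. -/

import Mathlib

open Asymptotics
open Filter Function Topology Nat

lemma aux_factor {f : ℝ → ℝ} {y₀ : ℝ} {m : ℕ}
    (hf : AnalyticAt ℝ f y₀)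
    (hz : ∀ j < m, iteratedDeriv j f y₀ = 0)
    (hnz : iteratedDeriv m f y₀ ≠ 0) :
    ∃ g : ℝ → ℝ, AnalyticAt ℝ g y₀ ∧ g y₀ ≠ 0 ∧
      ∀ᶠ z in 𝓝 y₀, f z = (z - y₀) ^ m * g z := by
  obtain ⟨p, hp⟩ := hf
  obtain ⟨r, hpr⟩ := hp
  have hc : ∀ j : ℕ, iteratedDeriv j f y₀ = j ! • p.coeff j := by
    intro j
    rw [iteratedDeriv, ← hpr.factorial_smul 1 j]
    rfl
  have hpm : p m ≠ 0 := by
    intro h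
    apply hnz
    rw [hc m, FormalMultilinearSeries.coeff_eq_zero.mpr h, smul_zero]
  have hp0 : p ≠ 0 := fun h => hpm (by simp [h])
  have hpj : ∀ j < m, p j = 0 := by
    intro j hj
    have := hz j hj
    rw [hc j, nsmul_eq_mul] at this
    rcases mul_eq_zero.mp this with h | h
    · exact absurd h (by positivity)
    · exact FormalMultilinearSeries.coeff_eq_zero.mp h
  have horder : p.order = m := by
    apply le_antisymm
    · exact Nat.sInf_le hpm
    · refine le_csInf ⟨m, hpm⟩ ?_
      intro j hj
      by_contra hlt
      exact hj (hpj j (not_le.mp hlt))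
  have hpat : HasFPowerSeriesAt f p y₀ := ⟨r, hpr⟩
  refine ⟨(Function.swap dslope y₀)^[m] f,
    ⟨_, hpat.has_fpower_series_iterate_dslope_fslope m⟩, ?_, ?_⟩
  · have := hpat.iterate_dslope_fslope_ne_zero hp0
    rwa [horder] at this
  · have := hpat.eq_pow_order_mul_iterate_dslope
    rw [horder] at this
    exact Filter.Eventually.of_forall (by simpa [smul_eq_mul] using this)


/-- cusp-type singularity analysis. If `x` has a zero of exact order
`2n+1` and `u` a zero of exact order `2n` at `y₀`, then the local inverse `y(x)`
satisfies `y(x) − y₀ = O(|x − x₀|^{1/(2n+1)})` and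
`u(y(x)) − u(y₀) = O(|x − x₀|^{2n/(2n+1)})` as `x → x₀ = x(y₀)`. -/
theorem cusp_singularity (n : ℕ) (hn : 1 ≤ n) (x u : ℝ → ℝ) (y₀ : ℝ)
    (hx : AnalyticAt ℝ x y₀) (hu : AnalyticAt ℝ u y₀)
    (hxz : ∀ j < 2 * n + 1, iteratedDeriv j (fun y => x y - x y₀) y₀ = 0)
    (hxn : iteratedDeriv (2 * n + 1) (fun y => x y - x y₀) y₀ ≠ 0)
    (huz : ∀ j < 2 * n, iteratedDeriv j (fun y => u y - u y₀) y₀ = 0)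
    (hun : iteratedDeriv (2 * n) (fun y => u y - u y₀) y₀ ≠ 0)
    (yinv : ℝ → ℝ) (hyc : ContinuousAt yinv (x y₀)) (hy0 : yinv (x y₀) = y₀)
    (hinv : ∀ᶠ s in nhds (x y₀), x (yinv s) = s) :
    ((fun s => yinv s - y₀) =O[nhds (x y₀)]
        fun s => |s - x y₀| ^ ((1 : ℝ) / (2 * n + 1))) ∧
    ((fun s => u (yinv s) - u y₀) =O[nhds (x y₀)]
        fun s => |s - x y₀| ^ ((2 * n : ℝ) / (2 * n + 1))) := by
  set m : ℕ := 2 * n + 1 with hm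
  obtain ⟨g, hg, hg0, hfg⟩ := aux_factor (hx.sub analyticAt_const) hxz hxn
  obtain ⟨k, hk, hk0, huk⟩ := aux_factor (hu.sub analyticAt_const) huz hun
  set c : ℝ := |g y₀| / 2 with hcdef
  have hcpos : 0 < c := by
    have : 0 < |g y₀| := abs_pos.mpr hg0
    positivity
  set K : ℝ := |k y₀| + 1 with hKdef
  -- eventual bounds near y₀
  have hgc : ∀ᶠ z in 𝓝 y₀, c ≤ |g z| := by
    have htend : Filter.Tendsto (fun z => |g z|) (𝓝 y₀) (𝓝 |g y₀|) :=
      (continuous_abs.tendsto _).comp hg.continuousAt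
    have : c < |g y₀| := by
      have : 0 < |g y₀| := abs_pos.mpr hg0
      rw [hcdef]; linarith
    exact (htend.eventually_const_le this).mono fun z hz => hz
  have hkc : ∀ᶠ z in 𝓝 y₀, |k z| ≤ K := by
    have htend : Filter.Tendsto (fun z => |k z|) (𝓝 y₀) (𝓝 |k y₀|) :=
      (continuous_abs.tendsto _).comp hk.continuousAt
    have : |k y₀| < K := by rw [hKdef]; linarith
    exact htend.eventually_le_const this
  have hlow : ∀ᶠ z in 𝓝 y₀, c * |z - y₀| ^ m ≤ |x z - x y₀| := by
    filter_upwards [hgc, hfg] with z h1 h2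
    have h2' : x z - x y₀ = (z - y₀) ^ m * g z := h2
    rw [h2', abs_mul, abs_pow]
    calc c * |z - y₀| ^ m ≤ |g z| * |z - y₀| ^ m := by
          apply mul_le_mul_of_nonneg_right h1 (by positivity)
      _ = |z - y₀| ^ m * |g z| := mul_comm _ _
  have hupp : ∀ᶠ z in 𝓝 y₀, |u z - u y₀| ≤ K * |z - y₀| ^ (2 * n) := by
    filter_upwards [hkc, huk] with z h1 h2
    have h2' : u z - u y₀ = (z - y₀) ^ (2 * n) * k z := h2
    rw [h2', abs_mul, abs_pow, mul_comm]
    apply mul_le_mul_of_nonneg_right h1 (by positivity)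
  -- transfer to the s variable
  have hyt : Filter.Tendsto yinv (𝓝 (x y₀)) (𝓝 y₀) := by
    have := hyc.tendsto; rwa [hy0] at this
  have hev : ∀ᶠ s in 𝓝 (x y₀),
      c * |yinv s - y₀| ^ m ≤ |s - x y₀| ∧
      |u (yinv s) - u y₀| ≤ K * |yinv s - y₀| ^ (2 * n) := by
    filter_upwards [hyt.eventually hlow, hyt.eventually hupp, hinv] with s h1 h2 h3
    refine ⟨?_, h2⟩
    rwa [h3] at h1
  have hmR : (m : ℝ) = 2 * (n : ℝ) + 1 := by push_cast [hm]; ring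
  have hmne : (2 * (n : ℝ) + 1) ≠ 0 := by positivity
  set e₁ : ℝ := (1 : ℝ) / (2 * (n : ℝ) + 1) with he1
  have he1pos : 0 < e₁ := by positivity
  -- the key pointwise bound for the first part
  have key1 : ∀ᶠ s in 𝓝 (x y₀),
      |yinv s - y₀| ≤ (1 / c) ^ e₁ * |s - x y₀| ^ e₁ := by
    filter_upwards [hev] with s hs
    have hb : (0 : ℝ) ≤ |yinv s - y₀| := abs_nonneg _
    have h1 : |yinv s - y₀| ^ m ≤ (1 / c) * |s - x y₀| := by
      rw [one_div, inv_mul_eq_div, le_div_iff₀ hcpos, mul_comm]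
      exact hs.1
    have h2 : (|yinv s - y₀| ^ m : ℝ) ^ e₁ ≤ ((1 / c) * |s - x y₀|) ^ e₁ :=
      Real.rpow_le_rpow (by positivity) h1 he1pos.le
    have h3 : (|yinv s - y₀| ^ m : ℝ) ^ e₁ = |yinv s - y₀| := by
      rw [← Real.rpow_natCast |yinv s - y₀| m, ← Real.rpow_mul hb, hmR]
      rw [he1]
      field_simp
      simp
    rw [h3] at h2
    calc |yinv s - y₀| ≤ ((1 / c) * |s - x y₀|) ^ e₁ := h2
      _ = (1 / c) ^ e₁ * |s - x y₀| ^ e₁ :=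
        Real.mul_rpow (by positivity) (abs_nonneg _)
  constructor
  · rw [isBigO_iff]
    refine ⟨(1 / c) ^ e₁, ?_⟩
    filter_upwards [key1] with s hs
    rw [Real.norm_eq_abs, Real.norm_eq_abs,
      abs_of_nonneg (Real.rpow_nonneg (abs_nonneg _) _)]
    calc |yinv s - y₀| ≤ (1 / c) ^ e₁ * |s - x y₀| ^ e₁ := hs
      _ = (1 / c) ^ e₁ * |s - x y₀| ^ ((1 : ℝ) / (2 * n + 1)) := by rw [he1]
  · rw [isBigO_iff]
    refine ⟨K * ((1 / c) ^ e₁) ^ (2 * n), ?_⟩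
    filter_upwards [key1, hev] with s hs1 hs2
    rw [Real.norm_eq_abs, Real.norm_eq_abs,
      abs_of_nonneg (Real.rpow_nonneg (abs_nonneg _) _)]
    have hb : (0 : ℝ) ≤ |yinv s - y₀| := abs_nonneg _
    have h4 : |yinv s - y₀| ^ (2 * n) ≤
        ((1 / c) ^ e₁ * |s - x y₀| ^ e₁) ^ (2 * n) :=
      pow_le_pow_left₀ hb hs1 _
    have h5 : ((1 / c) ^ e₁ * |s - x y₀| ^ e₁) ^ (2 * n)
        = ((1 / c) ^ e₁) ^ (2 * n) * (|s - x y₀| ^ e₁) ^ (2 * n) := by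
      rw [mul_pow]
    have h6 : (|s - x y₀| ^ e₁) ^ (2 * n)
        = |s - x y₀| ^ ((2 * n : ℝ) / (2 * n + 1)) := by
      rw [← Real.rpow_natCast (|s - x y₀| ^ e₁) (2 * n),
        ← Real.rpow_mul (abs_nonneg _), he1]
      congr 1
      push_cast
      field_simp
    calc |u (yinv s) - u y₀| ≤ K * |yinv s - y₀| ^ (2 * n) := hs2.2
      _ ≤ K * (((1 / c) ^ e₁) ^ (2 * n) * (|s - x y₀| ^ e₁) ^ (2 * n)) := by
          rw [← h5]
          apply mul_le_mul_of_nonneg_left h4 (by positivity)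
      _ = K * ((1 / c) ^ e₁) ^ (2 * n) * |s - x y₀| ^ ((2 * n : ℝ) / (2 * n + 1)) := by
          rw [h6]; ring
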